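/- Let S¹ = {z ∈ ℂ : |z| = 1} denote the unit circle and regard the torus as T = S¹ × S¹. There is no homeomorphism h : T → T satisfying h ∘ σ_rot = σ_anti ∘ h, where σ_rot(z, w) = (-z, w) and σ_anti(z, w) = (-z, w̄); that is, the two free involutions σ_rot and σ_anti on the torus are not equivariantly isomorphic. -/

import Mathlib

/-- The unit circle in `ℂ`. -/
abbrev UnitCircle := Metric.sphere (0 : ℂ) 1

/-- The torus `S¹ × S¹`. -/
abbrev Torus := UnitCircle × UnitCircle

/-- The rotation involution `σ_rot (z, w) = (-z, w)` on the torus. -/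
noncomputable def sigmaRot (p : Torus) : Torus := (-p.1, p.2)

/-- Complex conjugation on the unit circle. -/
noncomputable def circleConj (z : UnitCircle) : UnitCircle :=
  ⟨(starRingEnd ℂ) (z : ℂ), by
    have h2 := z.2
    simp only [Metric.mem_sphere, dist_eq_norm, sub_zero] at h2 ⊢
    simpa using h2⟩

/-- The antipodal-type involution `σ_anti (z, w) = (-z, conj w)` on the torus. -/
noncomputable def sigmaAnti (p : Torus) : Torus := (-p.1, circleConj p.2)


open Complex Real Set

private lemma tele_prod (f : ℕ → ℂ) (hf : ∀ j, f j * (starRingEnd ℂ) (f j) = 1) (m : ℕ) :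
    ∏ j ∈ Finset.range m, (f (j + 1) * (starRingEnd ℂ) (f j))
      = f m * (starRingEnd ℂ) (f 0) := by
  induction m with
  | zero => simp [(hf 0).symm]
  | succ m ih =>
      rw [Finset.prod_range_succ, ih]
      calc f m * (starRingEnd ℂ) (f 0) * (f (m + 1) * (starRingEnd ℂ) (f m))
          = f (m + 1) * (starRingEnd ℂ) (f 0) * (f m * (starRingEnd ℂ) (f m)) := by ring
        _ = f (m + 1) * (starRingEnd ℂ) (f 0) := by rw [hf m, mul_one]

private lemma no_nullhomotopy (G : ℝ × ℝ → ℂ) (hc : Continuous G)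
    (hnorm : ∀ p, ‖G p‖ = 1)
    (hper : ∀ s : ℝ, G (s, 0) = G (s, 1))
    (h0 : ∀ t : ℝ, G (0, t) = Complex.exp ((4 * π * t : ℝ) * Complex.I))
    (h1 : ∀ t : ℝ, G (1, t) = 1) : False := by
  -- uniform continuity on the unit square
  have hK : IsCompact ((Set.Icc (0:ℝ) 1) ×ˢ (Set.Icc (0:ℝ) 1)) :=
    isCompact_Icc.prod isCompact_Icc
  have hu := hK.uniformContinuousOn_of_continuous hc.continuousOn
  rw [Metric.uniformContinuousOn_iff] at hu
  obtain ⟨δ, hδ, hδ2⟩ := hu 2 two_pos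
  obtain ⟨n, hn⟩ := exists_nat_gt (max 9 (1 / δ))
  have hn9 : (9:ℝ) < n := lt_of_le_of_lt (le_max_left _ _) hn
  have hn0 : (0:ℝ) < n := by linarith
  have hinv : 1 / (n:ℝ) < δ := by
    have h1δ : 1 / δ < n := lt_of_le_of_lt (le_max_right _ _) hn
    rw [div_lt_iff₀ hδ] at h1δ
    rw [div_lt_iff₀ hn0]
    nlinarith
  -- the successive ratios lie in the slit plane
  have key : ∀ s ∈ Set.Icc (0:ℝ) 1, ∀ j : ℕ, j < n →
      G (s, ((j:ℝ) + 1) / n) * (starRingEnd ℂ) (G (s, (j:ℝ) / n)) ∈ slitPlane := by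
    intro s hs j hj
    set a := G (s, ((j:ℝ) + 1) / n) with ha
    set b := G (s, (j:ℝ) / n) with hb
    have hj1 : ((j:ℝ) + 1) ≤ n := by exact_mod_cast Nat.succ_le_of_lt hj
    have hmem1 : (s, ((j:ℝ) + 1) / n) ∈ (Set.Icc (0:ℝ) 1) ×ˢ (Set.Icc (0:ℝ) 1) := by
      refine ⟨hs, ?_, ?_⟩
      · positivity
      · rw [div_le_one hn0]; exact hj1
    have hmem2 : (s, (j:ℝ) / n) ∈ (Set.Icc (0:ℝ) 1) ×ˢ (Set.Icc (0:ℝ) 1) := by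
      refine ⟨hs, ?_, ?_⟩
      · positivity
      · rw [div_le_one hn0]; linarith
    have hdist : dist (s, ((j:ℝ) + 1) / n) (s, (j:ℝ) / n) < δ := by
      rw [Prod.dist_eq]
      simp only [dist_self]
      have heq : ((j:ℝ) + 1) / n - (j:ℝ) / n = 1 / n := by
        field_simp
        ring
      have : dist (((j:ℝ) + 1) / n) ((j:ℝ) / n) = 1 / n := by
        rw [Real.dist_eq, heq, abs_of_pos (by positivity)]
      rw [this]
      simpa using hinv
    have hlt := hδ2 _ hmem1 _ hmem2 hdist
    have hne : a ≠ -b := by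
      intro h
      rw [dist_eq_norm, ← ha, ← hb, h] at hlt
      have : ‖-b - b‖ = 2 := by
        have : -b - b = -(2 * b) := by ring
        rw [this, norm_neg]
        simp only [norm_mul]
        have : ‖b‖ = 1 := hnorm _
        rw [this]; norm_num
      rw [this] at hlt; norm_num at hlt
    -- conclude membership in the slit plane
    by_contra hnot
    rw [mem_slitPlane_iff] at hnot
    push_neg at hnot
    obtain ⟨hre, him⟩ := hnot
    set z := a * (starRingEnd ℂ) b with hz
    have habs : ‖z‖ = 1 := by
      rw [hz, norm_mul, Complex.norm_conj, hnorm, hnorm, mul_one]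
    have hzre : z = (z.re : ℂ) := by
      apply Complex.ext <;> simp [him]
    have : |z.re| = 1 := by
      rw [hzre] at habs
      simpa using habs
    have hzm1 : z = -1 := by
      rw [hzre]
      have : z.re = -1 := by
        rcases abs_cases z.re with ⟨h', _⟩ | ⟨h', _⟩ <;> linarith
      rw [this]; norm_num
    apply hne
    have hb1 : (starRingEnd ℂ) b * b = 1 := by
      rw [mul_comm, Complex.mul_conj, Complex.normSq_eq_norm_sq, hnorm]
      norm_num
    calc a = a * ((starRingEnd ℂ) b * b) := by rw [hb1, mul_one]
      _ = z * b := by rw [hz]; ring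
      _ = -b := by rw [hzm1]; ring
  -- the discrete winding number
  set W : ℝ → ℝ := fun s => ∑ j ∈ Finset.range n,
    Complex.arg (G (s, ((j:ℝ) + 1) / n) * (starRingEnd ℂ) (G (s, (j:ℝ) / n))) with hW
  have hWcont : ContinuousOn W (Set.Icc (0:ℝ) 1) := by
    apply continuousOn_finset_sum
    intro j hj
    rw [Finset.mem_range] at hj
    intro s hs
    have c1 : Continuous (fun s : ℝ => G (s, ((j:ℝ) + 1) / n)) :=
      hc.comp (continuous_id.prodMk continuous_const)
    have c2 : Continuous (fun s : ℝ => G (s, (j:ℝ) / n)) :=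
      hc.comp (continuous_id.prodMk continuous_const)
    have hzc : Continuous (fun s : ℝ =>
        G (s, ((j:ℝ) + 1) / n) * (starRingEnd ℂ) (G (s, (j:ℝ) / n))) :=
      c1.mul (Complex.continuous_conj.comp c2)
    have h1 : ContinuousAt Complex.arg
        (G (s, ((j:ℝ) + 1) / n) * (starRingEnd ℂ) (G (s, (j:ℝ) / n))) :=
      Complex.continuousAt_arg (key s hs j hj)
    have : ContinuousAt (Complex.arg ∘ (fun s : ℝ =>
        G (s, ((j:ℝ) + 1) / n) * (starRingEnd ℂ) (G (s, (j:ℝ) / n)))) s :=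
      ContinuousAt.comp (f := fun s : ℝ =>
        G (s, ((j:ℝ) + 1) / n) * (starRingEnd ℂ) (G (s, (j:ℝ) / n))) h1 hzc.continuousAt
    exact this.continuousWithinAt
  have hWint : ∀ s ∈ Set.Icc (0:ℝ) 1, ∃ k : ℤ, W s = (k:ℝ) * 2 * π := by
    intro s hs
    have hexp : Complex.exp ((W s : ℝ) * Complex.I) = 1 := by
      have : ((W s : ℝ) : ℂ) * Complex.I = ∑ j ∈ Finset.range n,
          ((Complex.arg (G (s, ((j:ℝ) + 1) / n) * (starRingEnd ℂ) (G (s, (j:ℝ) / n))) : ℝ) : ℂ)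
            * Complex.I := by
        rw [hW]
        push_cast
        rw [Finset.sum_mul]
      rw [this, Complex.exp_sum]
      have hterm : ∀ j ∈ Finset.range n,
          Complex.exp (((Complex.arg (G (s, ((j:ℝ) + 1) / n)
            * (starRingEnd ℂ) (G (s, (j:ℝ) / n))) : ℝ) : ℂ) * Complex.I)
          = G (s, ((j:ℝ) + 1) / n) * (starRingEnd ℂ) (G (s, (j:ℝ) / n)) := by
        intro j _
        set z := G (s, ((j:ℝ) + 1) / n) * (starRingEnd ℂ) (G (s, (j:ℝ) / n)) with hz
        have habs : ‖z‖ = 1 := by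
          rw [hz, norm_mul, Complex.norm_conj, hnorm, hnorm, mul_one]
        have := Complex.norm_mul_exp_arg_mul_I z
        rw [habs] at this
        simpa using this
      rw [Finset.prod_congr rfl hterm]
      have hf : ∀ j : ℕ, G (s, (j:ℝ) / n) * (starRingEnd ℂ) (G (s, (j:ℝ) / n)) = 1 := by
        intro j
        rw [Complex.mul_conj, Complex.normSq_eq_norm_sq, hnorm]
        norm_num
      have hcast : ∀ j ∈ Finset.range n,
          G (s, ((j:ℝ) + 1) / n) * (starRingEnd ℂ) (G (s, (j:ℝ) / n))
          = (fun j : ℕ => G (s, (j:ℝ) / n)) (j + 1)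
            * (starRingEnd ℂ) ((fun j : ℕ => G (s, (j:ℝ) / n)) j) := by
        intro j _
        push_cast
        rfl
      rw [Finset.prod_congr rfl hcast, tele_prod _ hf]
      simp only [Nat.cast_zero, zero_div]
      rw [div_self (ne_of_gt hn0), ← hper]
      simpa using hf 0
    rw [Complex.exp_eq_one_iff] at hexp
    obtain ⟨k, hk⟩ := hexp
    refine ⟨k, ?_⟩
    have : ((W s : ℝ) : ℂ) * Complex.I = (((k:ℝ) * 2 * π : ℝ) : ℂ) * Complex.I := by
      rw [hk]; push_cast; ring
    have := mul_right_cancel₀ Complex.I_ne_zero this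
    exact_mod_cast this
  -- W 1 = 0
  have hW1 : W 1 = 0 := by
    rw [hW]
    apply Finset.sum_eq_zero
    intro j _
    simp [h1]
  -- W 0 = 4π
  have hW0 : W 0 = 4 * π := by
    rw [hW]
    beta_reduce
    have hterm : ∀ j ∈ Finset.range n,
        Complex.arg (G (0, ((j:ℝ) + 1) / n) * (starRingEnd ℂ) (G (0, (j:ℝ) / n)))
          = 4 * π / n := by
      intro j _
      rw [h0, h0]
      have hconj : (starRingEnd ℂ) (Complex.exp ((4 * π * ((j:ℝ) / n) : ℝ) * Complex.I))
          = Complex.exp (-((4 * π * ((j:ℝ) / n) : ℝ) * Complex.I)) := by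
        rw [← Complex.exp_conj, map_mul, Complex.conj_I, Complex.conj_ofReal]
        ring_nf
      rw [hconj, ← Complex.exp_add]
      have harg : ((4 * π * (((j:ℝ) + 1) / n) : ℝ) : ℂ) * Complex.I
          + -(((4 * π * ((j:ℝ) / n) : ℝ) : ℂ) * Complex.I)
          = ((4 * π / n : ℝ) : ℂ) * Complex.I := by
        push_cast
        field_simp
        ring
      rw [harg, Complex.arg_exp_mul_I]
      rw [toIocMod_eq_self]
      constructor
      · have h4 : 0 < 4 * π / n := by positivity
        linarith [Real.pi_pos]
      · have : 4 * π / n ≤ 4 * π / 9 := by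
          apply div_le_div_of_nonneg_left (by positivity) (by norm_num) (le_of_lt hn9)
        have hπ : 4 * π / 9 < π := by nlinarith [Real.pi_pos]
        linarith
    rw [Finset.sum_congr rfl hterm, Finset.sum_const, Finset.card_range, nsmul_eq_mul]
    field_simp
  -- intermediate value theorem
  have hiv := intermediate_value_Icc' (by norm_num : (0:ℝ) ≤ 1) hWcont
  have hπmem : π ∈ Set.Icc (W 1) (W 0) := by
    rw [hW1, hW0]
    constructor
    · exact le_of_lt Real.pi_pos
    · nlinarith [Real.pi_pos]
  obtain ⟨c, hc', hcW⟩ := hiv hπmem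
  obtain ⟨k, hk⟩ := hWint c hc'
  rw [hcW] at hk
  have : (1:ℝ) = (k:ℝ) * 2 := by
    have hπ := Real.pi_ne_zero
    field_simp at hk
    nlinarith [hk]
  have : (1:ℤ) = k * 2 := by exact_mod_cast this
  omega


private noncomputable def er (t : ℝ) : UnitCircle :=
  ⟨Complex.exp ((t : ℝ) * Complex.I), by
    simp [mem_sphere_zero_iff_norm, Complex.norm_exp_ofReal_mul_I]⟩

@[simp] private lemma er_coe (t : ℝ) : (er t : ℂ) = Complex.exp ((t : ℝ) * Complex.I) := rfl

private noncomputable def mulU (a b : UnitCircle) : UnitCircle :=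
  ⟨(a : ℂ) * (b : ℂ), by
    have ha : ‖(a : ℂ)‖ = 1 := mem_sphere_zero_iff_norm.mp a.2
    have hb : ‖(b : ℂ)‖ = 1 := mem_sphere_zero_iff_norm.mp b.2
    simp [mem_sphere_zero_iff_norm, norm_mul, ha, hb]⟩

private lemma er_continuous : Continuous er := by
  apply Continuous.subtype_mk
  exact Complex.continuous_exp.comp (Complex.continuous_ofReal.mul continuous_const)

private lemma er_zero : er 0 = 1 := by
  apply Subtype.ext
  simp

private lemma mulU_one (x : UnitCircle) : mulU (er 0) x = x := by
  apply Subtype.ext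
  show Complex.exp (((0:ℝ) : ℂ) * Complex.I) * (x : ℂ) = (x : ℂ)
  simp

private lemma mulU_pi (x : UnitCircle) : mulU (er π) x = -x := by
  apply Subtype.ext
  show Complex.exp (((π:ℝ) : ℂ) * Complex.I) * (x : ℂ) = ((-x : UnitCircle) : ℂ)
  rw [coe_neg_sphere, Complex.exp_pi_mul_I]
  ring

/-- There is no homeomorphism `h` of the torus `T = S¹ × S¹` with
`h ∘ σ_rot = σ_anti ∘ h`: the two free involutions `σ_rot (z, w) = (-z, w)` and
`σ_anti (z, w) = (-z, conj w)` are not equivariantly isomorphic. -/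
theorem rot_not_equivariantly_isomorphic_anti :
    ¬ ∃ h : Torus ≃ₜ Torus, ∀ p : Torus, h (sigmaRot p) = sigmaAnti (h p) := by
  rintro ⟨h, hcomm⟩
  set c : ℝ → UnitCircle := fun t => er (2 * π * t) with hc
  set G : ℝ × ℝ → ℂ := fun q =>
    ((c q.2 : ℂ)) *
      ((h (mulU (er (π * q.1)) ((h.symm (er 0, c q.2)).1),
           (h.symm (er 0, c q.2)).2)).2 : ℂ) with hG
  have hccont : Continuous c := er_continuous.comp (continuous_const.mul continuous_id)
  have hcont : Continuous G := by
    have k1 : Continuous fun q : ℝ × ℝ => c q.2 := hccont.comp continuous_snd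
    have k0 : Continuous fun q : ℝ × ℝ => er (π * q.1) :=
      er_continuous.comp (continuous_const.mul continuous_fst)
    have ksymm : Continuous fun q : ℝ × ℝ => h.symm (er 0, c q.2) :=
      h.symm.continuous.comp (continuous_const.prodMk k1)
    have kmul : Continuous fun q : ℝ × ℝ =>
        mulU (er (π * q.1)) ((h.symm (er 0, c q.2)).1) := by
      apply Continuous.subtype_mk
      exact (continuous_subtype_val.comp k0).mul
        (continuous_subtype_val.comp (continuous_fst.comp ksymm))
    have kh : Continuous fun q : ℝ × ℝ =>
        h (mulU (er (π * q.1)) ((h.symm (er 0, c q.2)).1), (h.symm (er 0, c q.2)).2) :=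
      h.continuous.comp (kmul.prodMk (continuous_snd.comp ksymm))
    exact (continuous_subtype_val.comp k1).mul
      (continuous_subtype_val.comp (continuous_snd.comp kh))
  have hnorm : ∀ p : ℝ × ℝ, ‖G p‖ = 1 := by
    intro p
    have h1 : ‖(c p.2 : ℂ)‖ = 1 := mem_sphere_zero_iff_norm.mp (c p.2).2
    have h2 : ‖((h (mulU (er (π * p.1)) ((h.symm (er 0, c p.2)).1),
        (h.symm (er 0, c p.2)).2)).2 : ℂ)‖ = 1 :=
      mem_sphere_zero_iff_norm.mp (h _).2.2
    show ‖(_ * _ : ℂ)‖ = 1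
    rw [norm_mul, h1, h2, mul_one]
  have hc01 : c 0 = c 1 := by
    apply Subtype.ext
    show Complex.exp (((2 * π * 0 : ℝ) : ℂ) * Complex.I)
      = Complex.exp (((2 * π * 1 : ℝ) : ℂ) * Complex.I)
    have e1 : (2 * π * 0 : ℝ) = 0 := by ring
    have e2 : (2 * π * 1 : ℝ) = 2 * π := by ring
    rw [e1, e2]
    push_cast
    rw [Complex.exp_two_pi_mul_I]
    simp
  have hper : ∀ s : ℝ, G (s, 0) = G (s, 1) := by
    intro s
    show ((c 0 : ℂ)) * _ = ((c 1 : ℂ)) * _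
    rw [hc01]
  have h0 : ∀ t : ℝ, G (0, t) = Complex.exp ((4 * π * t : ℝ) * Complex.I) := by
    intro t
    show ((c t : ℂ)) *
      ((h (mulU (er (π * 0)) ((h.symm (er 0, c t)).1), (h.symm (er 0, c t)).2)).2 : ℂ) = _
    have e0 : er (π * 0) = er 0 := by norm_num
    rw [e0, mulU_one, Prod.mk.eta, Homeomorph.apply_symm_apply]
    show Complex.exp (((2 * π * t : ℝ) : ℂ) * Complex.I)
      * Complex.exp (((2 * π * t : ℝ) : ℂ) * Complex.I) = _
    rw [← Complex.exp_add]
    congr 1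
    push_cast
    ring
  have h1 : ∀ t : ℝ, G (1, t) = 1 := by
    intro t
    show ((c t : ℂ)) *
      ((h (mulU (er (π * 1)) ((h.symm (er 0, c t)).1), (h.symm (er 0, c t)).2)).2 : ℂ) = 1
    have e0 : er (π * 1) = er π := by norm_num
    rw [e0, mulU_pi]
    have hrot : ((-(h.symm (er 0, c t)).1, (h.symm (er 0, c t)).2) : Torus)
        = sigmaRot (h.symm (er 0, c t)) := rfl
    rw [hrot, hcomm, Homeomorph.apply_symm_apply]
    show Complex.exp (((2 * π * t : ℝ) : ℂ) * Complex.I)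
      * (starRingEnd ℂ) (Complex.exp (((2 * π * t : ℝ) : ℂ) * Complex.I)) = 1
    rw [Complex.mul_conj, Complex.normSq_eq_norm_sq, Complex.norm_exp_ofReal_mul_I]
    norm_num
  exact no_nullhomotopy G hcont hnorm hper h0 h1
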